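/- Let θ, ζ, μ : [0,∞) → [0,∞) be functions such that: (i) either θ is identically 0, or θ(t) > 0 for all t > 0; (ii) θ is monotone increasing and ∫_{0+}^1 1/θ(t) dt = ∞ (i.e., for every a > 0, ∫_a^1 1/θ(t) dt diverges as a → 0+); (iii) ζ is integrable on [0,∞) and μ is bounded. If μ(t) ≤ ∫_t^∞ θ(μ(s)) ζ(s) ds for all t ≥ 0, then μ is identically 0. -/

import Mathlib

open MeasureTheory Filter Set intervalIntegral

namespace BihariAux

noncomputable def psi (th : ℝ → ℝ) (x : ℝ) : ℝ := x⁻¹ * ∫ u in (0:ℝ)..(2*x), th u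

variable {th : ℝ → ℝ}

theorem th_ii (hm : Monotone th) (a b : ℝ) : IntervalIntegrable th volume a b :=
  (hm.monotoneOn _).intervalIntegrable

theorem psi_eq (hm : Monotone th) {x : ℝ} (hx : x ≠ 0) :
    psi th x = 2 * ∫ t in (0:ℝ)..1, th (2*x*t) := by
  have h := intervalIntegral.integral_comp_mul_left (a := (0:ℝ)) (b := 1) (f := th)
    (c := 2*x) (by simp [hx])
  rw [psi, h]
  simp only [mul_zero, mul_one, smul_eq_mul]
  field_simp

theorem comp_ii (hm : Monotone th) {x : ℝ} (hx : 0 ≤ x) (a b : ℝ) :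
    IntervalIntegrable (fun t => th (2*x*t)) volume a b := by
  have : Monotone fun t => th (2*x*t) := by
    intro s t hst
    exact hm (by nlinarith)
  exact (this.monotoneOn _).intervalIntegrable

theorem theta_le_psi (hm : Monotone th) (h0 : ∀ x, 0 ≤ th x) {x : ℝ} (hx : 0 < x) :
    th x ≤ psi th x := by
  rw [psi_eq hm hx.ne']
  have hsplit : (∫ t in (0:ℝ)..(1/2), th (2*x*t)) + (∫ t in (1/2:ℝ)..1, th (2*x*t))
      = ∫ t in (0:ℝ)..1, th (2*x*t) :=
    intervalIntegral.integral_add_adjacent_intervals (comp_ii hm hx.le _ _) (comp_ii hm hx.le _ _)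
  have h1 : (0:ℝ) ≤ ∫ t in (0:ℝ)..(1/2), th (2*x*t) :=
    intervalIntegral.integral_nonneg (by norm_num) (fun u _ => h0 _)
  have h2 : (∫ t in (1/2:ℝ)..1, (th x : ℝ)) ≤ ∫ t in (1/2:ℝ)..1, th (2*x*t) := by
    apply intervalIntegral.integral_mono_on (by norm_num)
      intervalIntegrable_const (comp_ii hm hx.le _ _)
    intro t ht
    exact hm (by nlinarith [ht.1])
  rw [intervalIntegral.integral_const] at h2
  have : (1 - 1/2 : ℝ) • th x = th x / 2 := by norm_num; ring
  rw [this] at h2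
  linarith

theorem psi_le (hm : Monotone th) {x : ℝ} (hx : 0 < x) :
    psi th x ≤ 2 * th (2*x) := by
  rw [psi_eq hm hx.ne']
  have h2 : (∫ t in (0:ℝ)..1, th (2*x*t)) ≤ ∫ t in (0:ℝ)..1, (th (2*x) : ℝ) := by
    apply intervalIntegral.integral_mono_on (by norm_num)
      (comp_ii hm hx.le _ _) intervalIntegrable_const
    intro t ht
    exact hm (by nlinarith [ht.1, ht.2])
  rw [intervalIntegral.integral_const] at h2
  simp only [sub_zero, one_smul] at h2
  linarith

theorem psi_pos (hm : Monotone th) (h0 : ∀ x, 0 ≤ th x) (hpos : ∀ x, 0 < x → 0 < th x)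
    {x : ℝ} (hx : 0 < x) : 0 < psi th x :=
  lt_of_lt_of_le (hpos x hx) (theta_le_psi hm h0 hx)

theorem psi_monoOn (hm : Monotone th) : MonotoneOn (psi th) (Set.Ioi 0) := by
  intro x hx y hy hxy
  rw [psi_eq hm (ne_of_gt hx), psi_eq hm (ne_of_gt hy)]
  have : (∫ t in (0:ℝ)..1, th (2*x*t)) ≤ ∫ t in (0:ℝ)..1, th (2*y*t) := by
    apply intervalIntegral.integral_mono_on (by norm_num)
      (comp_ii hm (le_of_lt hx) _ _) (comp_ii hm (le_of_lt hy) _ _)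
    intro t ht
    exact hm (by nlinarith [ht.1])
  linarith

theorem psi_continuousAt (hm : Monotone th) {x : ℝ} (hx : x ≠ 0) :
    ContinuousAt (psi th) x := by
  have hc : Continuous fun y : ℝ => ∫ u in (0:ℝ)..(2*y), th u :=
    (intervalIntegral.continuous_primitive (fun a b => th_ii hm a b) 0).comp
      (continuous_const.mul continuous_id)
  exact (continuousAt_inv₀ hx).mul hc.continuousAt

end BihariAux

namespace BihariAux

variable {th : ℝ → ℝ}

theorem inv_psi_ii (hm : Monotone th) (h0 : ∀ x, 0 ≤ th x) (hpos : ∀ x, 0 < x → 0 < th x)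
    {p q : ℝ} (hp : 0 < p) (hq : 0 < q) :
    IntervalIntegrable (fun y => (psi th y)⁻¹) volume p q := by
  apply AntitoneOn.intervalIntegrable
  intro a ha b hb hab
  have hmin : 0 < min p q := lt_min hp hq
  have ha0 : 0 < a := lt_of_lt_of_le hmin ha.1
  have hb0 : 0 < b := lt_of_lt_of_le hmin hb.1
  exact inv_anti₀ (psi_pos hm h0 hpos ha0)
    (psi_monoOn hm ha0 hb0 hab)

theorem inv_th_ii (hm : Monotone th) (hpos : ∀ x, 0 < x → 0 < th x)
    {p q : ℝ} (hp : 0 < p) (hq : 0 < q) :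
    IntervalIntegrable (fun u => (th u)⁻¹) volume p q := by
  apply AntitoneOn.intervalIntegrable
  intro a ha b hb hab
  have hmin : 0 < min p q := lt_min hp hq
  have ha0 : 0 < a := lt_of_lt_of_le hmin ha.1
  exact inv_anti₀ (hpos a ha0) (hm hab)

theorem psi_osgood (hm : Monotone th) (h0 : ∀ x, 0 ≤ th x) (hpos : ∀ x, 0 < x → 0 < th x)
    (hosg : Tendsto (fun a => ∫ t in a..1, (th t)⁻¹) (nhdsWithin 0 (Set.Ioi 0)) atTop)
    {c : ℝ} (hc : 0 < c) :
    Tendsto (fun a => ∫ y in a..c, (psi th y)⁻¹) (nhdsWithin 0 (Set.Ioi 0)) atTop := by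
  set m := min c 1 with hmdef
  have hm0 : 0 < m := lt_min hc one_pos
  have hmc : m ≤ c := min_le_left _ _
  have hm1 : m ≤ 1 := min_le_right _ _
  set K : ℝ := ∫ u in (1:ℝ)..(2*m), (th u)⁻¹ with hK
  have h2a : Tendsto (fun a : ℝ => 2*a) (nhdsWithin 0 (Set.Ioi 0)) (nhdsWithin 0 (Set.Ioi 0)) := by
    refine tendsto_nhdsWithin_of_tendsto_nhds_of_eventually_within _ ?_ ?_
    · have : Tendsto (fun a : ℝ => 2*a) (nhds 0) (nhds 0) := by
        simpa using (continuous_mul_left (2:ℝ)).tendsto (0:ℝ)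
      exact this.mono_left nhdsWithin_le_nhds
    · filter_upwards [self_mem_nhdsWithin] with a ha
      exact mul_pos two_pos (Set.mem_Ioi.mp ha)
  have hbig : Tendsto (fun a : ℝ => (4:ℝ)⁻¹ * ((∫ u in (2*a)..1, (th u)⁻¹) + K))
      (nhdsWithin 0 (Set.Ioi 0)) atTop := by
    apply Tendsto.const_mul_atTop (by norm_num)
    exact tendsto_atTop_add_const_right _ K (hosg.comp h2a)
  apply tendsto_atTop_mono' _ _ hbig
  filter_upwards [Ioo_mem_nhdsGT_of_mem (Set.left_mem_Ico.mpr hm0)] with a ha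
  obtain ⟨ha0, ham⟩ := ha
  have h2a0 : (0:ℝ) < 2*a := by linarith
  have h2m0 : (0:ℝ) < 2*m := by linarith
  have h1 : (∫ y in a..c, (psi th y)⁻¹)
      = (∫ y in a..m, (psi th y)⁻¹) + ∫ y in m..c, (psi th y)⁻¹ :=
    (intervalIntegral.integral_add_adjacent_intervals
      (inv_psi_ii hm h0 hpos ha0 hm0) (inv_psi_ii hm h0 hpos hm0 hc)).symm
  have h2 : (0:ℝ) ≤ ∫ y in m..c, (psi th y)⁻¹ := by
    apply intervalIntegral.integral_nonneg hmc
    intro u hu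
    exact inv_nonneg.mpr (psi_pos hm h0 hpos (lt_of_lt_of_le hm0 hu.1)).le
  have h3 : (∫ y in a..m, (fun y => (2 * th (2*y))⁻¹) y) ≤ ∫ y in a..m, (psi th y)⁻¹ := by
    apply intervalIntegral.integral_mono_on ham.le ?_ (inv_psi_ii hm h0 hpos ha0 hm0)
    · intro y hy
      have hy0 : 0 < y := lt_of_lt_of_le ha0 hy.1
      exact inv_anti₀ (psi_pos hm h0 hpos hy0) (psi_le hm hy0)
    · apply AntitoneOn.intervalIntegrable
      intro s hs t ht hst
      have hminm : 0 < min a m := lt_min ha0 hm0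
      have hs0 : 0 < s := lt_of_lt_of_le hminm hs.1
      have : th (2*s) ≤ th (2*t) := hm (by linarith)
      have hts : (0:ℝ) < 2 * th (2*s) := by
        have := hpos (2*s) (by linarith)
        linarith
      exact inv_anti₀ hts (by linarith)
  have h4 : (∫ y in a..m, (fun y => (2 * th (2*y))⁻¹) y)
      = (4:ℝ)⁻¹ * ∫ u in (2*a)..(2*m), (th u)⁻¹ := by
    have e1 : ∀ y : ℝ, (2 * th (2*y))⁻¹ = 2⁻¹ * (th (2*y))⁻¹ := by
      intro y; rw [mul_inv]
    simp only [e1]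
    rw [intervalIntegral.integral_const_mul]
    have e2 := intervalIntegral.integral_comp_mul_left (a := a) (b := m)
      (f := fun u => (th u)⁻¹) (c := (2:ℝ)) (by norm_num)
    rw [e2]
    simp only [smul_eq_mul]
    ring
  have h5 : (∫ u in (2*a)..(2*m), (th u)⁻¹)
      = (∫ u in (2*a)..1, (th u)⁻¹) + K :=
    (intervalIntegral.integral_add_adjacent_intervals
      (inv_th_ii hm hpos h2a0 one_pos) (inv_th_ii hm hpos one_pos h2m0)).symm
  calc (4:ℝ)⁻¹ * ((∫ u in (2*a)..1, (th u)⁻¹) + K)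
      = (∫ y in a..m, (fun y => (2 * th (2*y))⁻¹) y) := by rw [h4, h5]
    _ ≤ ∫ y in a..m, (psi th y)⁻¹ := h3
    _ ≤ ∫ y in a..c, (psi th y)⁻¹ := by rw [h1]; linarith

end BihariAux


theorem bihari_osgood_uniqueness
    (θ ζ μ : ℝ → ℝ)
    (hθ_nonneg : ∀ t, 0 ≤ t → 0 ≤ θ t)
    (hζ_nonneg : ∀ t, 0 ≤ t → 0 ≤ ζ t)
    (hμ_nonneg : ∀ t, 0 ≤ t → 0 ≤ μ t)
    (hθ_dichotomy : (∀ t, 0 ≤ t → θ t = 0) ∨ (∀ t, 0 < t → 0 < θ t))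
    (hθ_mono : MonotoneOn θ (Set.Ici 0))
    (hθ_osgood : Tendsto (fun a => ∫ t in a..1, 1 / θ t) (nhdsWithin 0 (Set.Ioi 0)) atTop)
    (hζ_int : IntegrableOn ζ (Set.Ici 0))
    (hμ_bdd : ∃ M, ∀ t, 0 ≤ t → μ t ≤ M)
    (h : ∀ t, 0 ≤ t → μ t ≤ ∫ s in Set.Ioi t, θ (μ s) * ζ s) :
    ∀ t, 0 ≤ t → μ t = 0 := by
  intro t0 ht0
  rcases hθ_dichotomy with hzero | hpos
  · -- θ vanishes on [0,∞)
    have hint0 : (∫ s in Set.Ioi t0, θ (μ s) * ζ s) = 0 := by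
      rw [MeasureTheory.setIntegral_congr_fun (g := fun _ => (0:ℝ)) measurableSet_Ioi ?_]
      · exact integral_zero _ _
      · intro s hs
        have hs0 : (0:ℝ) ≤ s := le_trans ht0 (le_of_lt hs)
        show θ (μ s) * ζ s = 0
        rw [hzero (μ s) (hμ_nonneg s hs0), zero_mul]
    have h1 := h t0 ht0
    rw [hint0] at h1
    exact le_antisymm h1 (hμ_nonneg t0 ht0)
  · by_contra hne
    have hμpos : 0 < μ t0 := (hμ_nonneg t0 ht0).lt_of_ne (Ne.symm hne)
    -- globalized monotone theta
    set th : ℝ → ℝ := fun x => θ (max x 0) with hth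
    have hm : Monotone th := fun a b hab =>
      hθ_mono (Set.mem_Ici.mpr (le_max_right _ _)) (Set.mem_Ici.mpr (le_max_right _ _))
        (max_le_max hab le_rfl)
    have h0' : ∀ x, 0 ≤ th x := fun x => hθ_nonneg _ (le_max_right _ _)
    have hpos' : ∀ x, 0 < x → 0 < th x := by
      intro x hx
      have : max x 0 = x := max_eq_left hx.le
      rw [hth]; simp only [this]; exact hpos x hx
    have hth_eq : ∀ x, 0 ≤ x → th x = θ x := by
      intro x hx; rw [hth]; simp [max_eq_left hx]
    have hosg' : Tendsto (fun a => ∫ t in a..1, (th t)⁻¹)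
        (nhdsWithin 0 (Set.Ioi 0)) atTop := by
      apply hθ_osgood.congr'
      filter_upwards [Ioo_mem_nhdsGT_of_mem (Set.left_mem_Ico.mpr one_pos)] with a ha
      apply intervalIntegral.integral_congr
      intro u hu
      rw [Set.uIcc_of_le ha.2.le] at hu
      have hu0 : (0:ℝ) ≤ u := le_trans ha.1.le hu.1
      show 1 / θ u = (th u)⁻¹
      rw [one_div, hth_eq u hu0]
    set g : ℝ → ℝ := fun s => θ (μ s) * ζ s with hg
    by_cases hgi : IntegrableOn g (Set.Ioi t0)
    swap
    · have hzero' : (∫ s in Set.Ioi t0, θ (μ s) * ζ s) = 0 := integral_undef hgi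
      have h1 := h t0 ht0
      rw [hzero'] at h1
      linarith
    -- the decreasing tail function v
    set v : ℝ → ℝ := fun T => ∫ s in Set.Ioi T, g s with hv
    have hgIoi : ∀ {T}, t0 ≤ T → IntegrableOn g (Set.Ioi T) :=
      fun hT => hgi.mono_set (Set.Ioi_subset_Ioi hT)
    have hgIoc : ∀ {T U}, t0 ≤ T → IntegrableOn g (Set.Ioc T U) :=
      fun hT => hgi.mono_set (subset_trans Set.Ioc_subset_Ioi_self (Set.Ioi_subset_Ioi hT))
    have hsplit : ∀ T U, t0 ≤ T → T ≤ U → v T = (∫ s in Set.Ioc T U, g s) + v U := by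
      intro T U hT hTU
      rw [hv]
      simp only
      rw [← MeasureTheory.setIntegral_union Set.Ioc_disjoint_Ioi_same measurableSet_Ioi
        (hgIoc hT) (hgIoi (hT.trans hTU)), Set.Ioc_union_Ioi_eq_Ioi hTU]
    have hgnn : ∀ s, t0 < s → 0 ≤ g s := by
      intro s hs
      have hs0 : (0:ℝ) ≤ s := le_trans ht0 hs.le
      exact mul_nonneg (hθ_nonneg _ (hμ_nonneg s hs0)) (hζ_nonneg s hs0)
    have hIocnn : ∀ T U, t0 ≤ T → 0 ≤ ∫ s in Set.Ioc T U, g s := fun T U hT =>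
      setIntegral_nonneg measurableSet_Ioc (fun s hs => hgnn s (lt_of_le_of_lt hT hs.1))
    have hvnn : ∀ T, t0 ≤ T → 0 ≤ v T := fun T hT =>
      setIntegral_nonneg measurableSet_Ioi (fun s hs => hgnn s (lt_of_le_of_lt hT hs))
    have hvanti : ∀ T U, t0 ≤ T → T ≤ U → v U ≤ v T := by
      intro T U hT hTU
      have h1 := hsplit T U hT hTU
      have h2 := hIocnn T U hT
      linarith
    have hμv : ∀ s, t0 ≤ s → μ s ≤ v s := fun s hs => h s (ht0.trans hs)
    set c := v t0 with hcdef
    have hc : 0 < c := lt_of_lt_of_le hμpos (hμv t0 le_rfl)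
    -- zeta mass
    set W : ℝ → ℝ := fun T => ∫ s in Set.Ioc t0 T, ζ s with hW
    set Z : ℝ := ∫ s in Set.Ici 0, ζ s with hZ
    have hζIoc : ∀ {T U : ℝ}, 0 ≤ T → IntegrableOn ζ (Set.Ioc T U) :=
      fun hT => hζ_int.mono_set (fun s hs => Set.mem_Ici.mpr (le_trans hT hs.1.le))
    have hWnn : ∀ T U, t0 ≤ T → 0 ≤ ∫ s in Set.Ioc T U, ζ s := fun T U hT =>
      setIntegral_nonneg measurableSet_Ioc
        (fun s hs => hζ_nonneg s (le_trans (ht0.trans hT) hs.1.le))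
    have hWZ : ∀ T, t0 ≤ T → W T ≤ Z := by
      intro T hT
      apply setIntegral_mono_set hζ_int
      · exact (ae_restrict_iff' measurableSet_Ici).mpr (Filter.Eventually.of_forall hζ_nonneg)
      · exact HasSubset.Subset.eventuallyLE (fun s hs => Set.mem_Ici.mpr (le_trans ht0 hs.1.le))
    have hWadd : ∀ T U, t0 ≤ T → T ≤ U → W U = W T + ∫ s in Set.Ioc T U, ζ s := by
      intro T U hT hTU
      rw [hW]
      simp only
      rw [← MeasureTheory.setIntegral_union (Set.Ioc_disjoint_Ioc_of_le le_rfl) measurableSet_Ioc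
        (hζIoc ht0) (hζIoc (ht0.trans hT)), Set.Ioc_union_Ioc_eq_Ioc hT hTU]
    -- the key comparison inequality
    have hkey : ∀ T U, t0 ≤ T → T ≤ U → 0 < v T →
        v T - v U ≤ BihariAux.psi th (v T) * ∫ s in Set.Ioc T U, ζ s := by
      intro T U hT hTU hvT
      have hsp := hsplit T U hT hTU
      have hmono : (∫ s in Set.Ioc T U, g s)
          ≤ ∫ s in Set.Ioc T U, BihariAux.psi th (v T) * ζ s := by
        apply setIntegral_mono_on (hgIoc hT) ((hζIoc (ht0.trans hT)).const_mul _)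
          measurableSet_Ioc
        intro s hs
        have hs0 : (0:ℝ) ≤ s := le_trans (ht0.trans hT) hs.1.le
        have h1 : μ s ≤ v T := le_trans (hμv s (hT.trans hs.1.le)) (hvanti T s hT hs.1.le)
        have h2 : θ (μ s) ≤ θ (v T) :=
          hθ_mono (Set.mem_Ici.mpr (hμ_nonneg s hs0)) (Set.mem_Ici.mpr hvT.le) h1
        have h3 : θ (v T) ≤ BihariAux.psi th (v T) := by
          rw [← hth_eq _ hvT.le]
          exact BihariAux.theta_le_psi hm h0' hvT
        calc θ (μ s) * ζ s ≤ θ (v T) * ζ s :=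
              mul_le_mul_of_nonneg_right h2 (hζ_nonneg s hs0)
          _ ≤ BihariAux.psi th (v T) * ζ s :=
              mul_le_mul_of_nonneg_right h3 (hζ_nonneg s hs0)
      rw [MeasureTheory.integral_const_mul] at hmono
      linarith
    -- continuity of v
    have hvcont : ∀ b : ℝ, ContinuousOn v (Set.Icc t0 b) := by
      intro b
      have hgIcc : IntegrableOn g (Set.Icc t0 b) :=
        (integrableOn_Icc_iff_integrableOn_Ioc).mpr (hgIoc le_rfl)
      have hcont := intervalIntegral.continuousOn_primitive (f := g) (μ := volume)
        (a := t0) (b := b) hgIcc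
      have hcont2 : ContinuousOn (fun T => c - ∫ t in Set.Ioc t0 T, g t) (Set.Icc t0 b) :=
        continuousOn_const.sub hcont
      apply hcont2.congr
      intro T hT
      have h1 := hsplit t0 T le_rfl hT.1
      rw [← hcdef] at h1
      show v T = c - ∫ t in Set.Ioc t0 T, g t
      linarith
    -- the Osgood functional
    set invpsi : ℝ → ℝ := fun y => (BihariAux.psi th y)⁻¹ with hinvpsi
    set G : ℝ → ℝ := fun y => ∫ u in y..c, invpsi u with hGdef
    have hGadd : ∀ p q, 0 < p → 0 < q → G p = (∫ u in p..q, invpsi u) + G q := by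
      intro p q hp hq
      rw [hGdef]
      simp only
      exact (intervalIntegral.integral_add_adjacent_intervals
        (BihariAux.inv_psi_ii hm h0' hpos' hp hq)
        (BihariAux.inv_psi_ii hm h0' hpos' hq hc)).symm
    -- main bound by continuous induction
    have main : ∀ T', t0 ≤ T' → 0 < v T' → G (v T') ≤ 2 * Z := by
      intro T' hT' he
      have heC : v T' ≤ c := hvanti t0 T' le_rfl hT'
      have hrange : ∀ T ∈ Set.Icc t0 T', v T ∈ Set.Icc (v T') c := fun T hT =>
        ⟨hvanti T T' hT.1 hT.2, hvanti t0 T le_rfl hT.1⟩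
      have hGcont : ContinuousOn G (Set.Icc (v T') c) := by
        have hii : IntervalIntegrable invpsi volume (v T') c :=
          BihariAux.inv_psi_ii hm h0' hpos' he hc
        have hprim : ContinuousOn (fun y => ∫ u in (v T')..y, invpsi u) (Set.uIcc (v T') c) :=
          intervalIntegral.continuousOn_primitive_interval' hii Set.left_mem_uIcc
        rw [Set.uIcc_of_le heC] at hprim
        apply (continuousOn_const.sub hprim).congr
        intro y hy
        have hy0 : 0 < y := lt_of_lt_of_le he hy.1
        have := hGadd (v T') y he hy0
        change G y = G (v T') - ∫ u in (v T')..y, invpsi u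
        linarith
      have hWcont : ContinuousOn W (Set.Icc t0 T') := by
        have : IntegrableOn ζ (Set.Icc t0 T') :=
          hζ_int.mono_set (fun s hs => Set.mem_Ici.mpr (le_trans ht0 hs.1))
        exact intervalIntegral.continuousOn_primitive this
      have hfcont : ContinuousOn (fun T => G (v T) - 2 * W T) (Set.Icc t0 T') :=
        (hGcont.comp (hvcont T') hrange).sub (continuousOn_const.mul hWcont)
      set S : Set ℝ := Set.Icc t0 T' ∩ (fun T => G (v T) - 2 * W T) ⁻¹' Set.Iic 0 with hS
      have hSclosed : IsClosed S :=
        hfcont.preimage_isClosed_of_isClosed isClosed_Icc isClosed_Iic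
      have ht0S : t0 ∈ S := by
        refine ⟨⟨le_rfl, hT'⟩, ?_⟩
        simp only [Set.mem_preimage, Set.mem_Iic]
        have h1 : G (v t0) = 0 := by
          rw [← hcdef, hGdef]; exact intervalIntegral.integral_same
        have h2 : W t0 = 0 := by rw [hW]; simp [Set.Ioc_self]
        rw [h1, h2]; norm_num
      have hSbdd : BddAbove S := bddAbove_Icc.mono Set.inter_subset_left
      have hmS : sSup S ∈ S := hSclosed.csSup_mem ⟨t0, ht0S⟩ hSbdd
      set m := sSup S with hmdef
      have hm1 : t0 ≤ m := hmS.1.1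
      have hm2 : m ≤ T' := hmS.1.2
      have hGmW : G (v m) ≤ 2 * W m := by
        have := hmS.2
        simp only [Set.mem_preimage, Set.mem_Iic] at this
        linarith
      rcases eq_or_lt_of_le hm2 with heq | hlt
      · rw [heq] at hGmW
        have := hWZ T' hT'
        linarith
      · exfalso
        have hvm_pos : 0 < v m := lt_of_lt_of_le he (hvanti m T' hm1 hlt.le)
        have hψm_pos : 0 < BihariAux.psi th (v m) := BihariAux.psi_pos hm h0' hpos' hvm_pos
        have hcwa : ContinuousWithinAt v (Set.Ioc m T') m :=
          ((hvcont T') m hmS.1).mono (fun x hx => ⟨hm1.trans hx.1.le, hx.2⟩)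
        have htendψ : Tendsto (fun T => BihariAux.psi th (v T))
            (nhdsWithin m (Set.Ioc m T')) (nhds (BihariAux.psi th (v m))) :=
          (BihariAux.psi_continuousAt hm hvm_pos.ne').tendsto.comp hcwa
        haveI : (nhdsWithin m (Set.Ioc m T')).NeBot := by
          apply mem_closure_iff_nhdsWithin_neBot.mp
          rw [closure_Ioc hlt.ne]
          exact ⟨le_rfl, hlt.le⟩
        have hev := (htendψ.eventually (eventually_gt_nhds
          (by linarith : BihariAux.psi th (v m) / 2 < BihariAux.psi th (v m)))).and
          eventually_mem_nhdsWithin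
        obtain ⟨T'', hψT'', hT''mem⟩ := hev.exists
        have hmT'' : m < T'' := hT''mem.1
        have hT''le : T'' ≤ T' := hT''mem.2
        have hT''Icc : T'' ∈ Set.Icc t0 T' := ⟨hm1.trans hmT''.le, hT''le⟩
        have hvT''pos : 0 < v T'' := lt_of_lt_of_le he (hvanti T'' T' hT''Icc.1 hT''le)
        have hψT''pos : 0 < BihariAux.psi th (v T'') := BihariAux.psi_pos hm h0' hpos' hvT''pos
        have hvle : v T'' ≤ v m := hvanti m T'' hm1 hmT''.le
        have hkey' := hkey m T'' hm1 hmT''.le hvm_pos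
        have hIζnn : 0 ≤ ∫ s in Set.Ioc m T'', ζ s := hWnn m T'' hm1
        have hGsplit := hGadd (v T'') (v m) hvT''pos hvm_pos
        have hmono : (∫ u in (v T'')..(v m), invpsi u) ≤ (v m - v T'') * invpsi (v T'') := by
          have hstep : (∫ u in (v T'')..(v m), invpsi u)
              ≤ ∫ _u in (v T'')..(v m), invpsi (v T'') := by
            apply intervalIntegral.integral_mono_on hvle
              (BihariAux.inv_psi_ii hm h0' hpos' hvT''pos hvm_pos) intervalIntegrable_const
            intro u hu
            have hu0 : 0 < u := lt_of_lt_of_le hvT''pos hu.1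
            rw [hinvpsi]
            simp only
            exact inv_anti₀ hψT''pos
              (BihariAux.psi_monoOn hm (Set.mem_Ioi.mpr hvT''pos) (Set.mem_Ioi.mpr hu0) hu.1)
          rwa [intervalIntegral.integral_const, smul_eq_mul] at hstep
        have hratio : BihariAux.psi th (v m) * invpsi (v T'') ≤ 2 := by
          have h2ψ : BihariAux.psi th (v m) ≤ 2 * BihariAux.psi th (v T'') := by linarith
          rw [hinvpsi]
          simp only
          calc BihariAux.psi th (v m) * (BihariAux.psi th (v T''))⁻¹
              ≤ (2 * BihariAux.psi th (v T'')) * (BihariAux.psi th (v T''))⁻¹ :=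
                mul_le_mul_of_nonneg_right h2ψ (inv_nonneg.mpr hψT''pos.le)
            _ = 2 := by field_simp
        have hinvnn : 0 ≤ invpsi (v T'') := by
          rw [hinvpsi]; exact inv_nonneg.mpr hψT''pos.le
        have hstep2 : G (v T'') ≤ G (v m) + 2 * ∫ s in Set.Ioc m T'', ζ s := by
          have e1 : (v m - v T'') * invpsi (v T'')
              ≤ BihariAux.psi th (v m) * (∫ s in Set.Ioc m T'', ζ s) * invpsi (v T'') :=
            mul_le_mul_of_nonneg_right hkey' hinvnn
          have e2 : BihariAux.psi th (v m) * (∫ s in Set.Ioc m T'', ζ s) * invpsi (v T'')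
              ≤ 2 * ∫ s in Set.Ioc m T'', ζ s := by
            calc BihariAux.psi th (v m) * (∫ s in Set.Ioc m T'', ζ s) * invpsi (v T'')
                = (BihariAux.psi th (v m) * invpsi (v T'')) * ∫ s in Set.Ioc m T'', ζ s := by
                  ring
              _ ≤ 2 * ∫ s in Set.Ioc m T'', ζ s :=
                  mul_le_mul_of_nonneg_right hratio hIζnn
          linarith
        have hT''S : T'' ∈ S := by
          refine ⟨hT''Icc, ?_⟩
          simp only [Set.mem_preimage, Set.mem_Iic]
          have hWm := hWadd m T'' hm1 hmT''.le
          linarith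
        exact absurd (le_csSup hSbdd hT''S) (not_le.mpr hmT'')
    -- Osgood divergence gives the contradiction
    have hGtend : Tendsto G (nhdsWithin 0 (Set.Ioi 0)) atTop := by
      rw [hGdef]
      exact BihariAux.psi_osgood hm h0' hpos' hosg' hc
    obtain ⟨δ0, hδ0mem, hδsub⟩ := mem_nhdsGT_iff_exists_Ioo_subset.mp
      (hGtend.eventually (eventually_gt_atTop (2*Z)))
    have hδ0pos : (0:ℝ) < δ0 := hδ0mem
    have hfinal : ∀ T, t0 ≤ T → 0 < v T → v T < δ0 → False := by
      intro T hT h1 h2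
      have hx : 2*Z < G (v T) := hδsub ⟨h1, h2⟩
      have hy := main T hT h1
      linarith
    by_cases hhit : ∃ b, t0 ≤ b ∧ v b = 0
    · obtain ⟨b, hb1, hb2⟩ := hhit
      set Zs : Set ℝ := Set.Icc t0 b ∩ v ⁻¹' {0} with hZs
      have hZsclosed : IsClosed Zs :=
        (hvcont b).preimage_isClosed_of_isClosed isClosed_Icc isClosed_singleton
      have hZsne : Zs.Nonempty := ⟨b, ⟨⟨hb1, le_rfl⟩, hb2⟩⟩
      have hZsbdd : BddBelow Zs := bddBelow_Icc.mono Set.inter_subset_left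
      have hTs := hZsclosed.csInf_mem hZsne hZsbdd
      set Ts := sInf Zs with hTsdef
      have hTs1 : t0 ≤ Ts := hTs.1.1
      have hTsb : Ts ≤ b := hTs.1.2
      have hvTs : v Ts = 0 := hTs.2
      have hTs0 : t0 < Ts := by
        rcases eq_or_lt_of_le hTs1 with heq | hlt
        · exfalso; rw [← heq] at hvTs; rw [hcdef, hvTs] at hc; exact lt_irrefl _ hc
        · exact hlt
      haveI : (nhdsWithin Ts (Set.Ico t0 Ts)).NeBot := by
        apply mem_closure_iff_nhdsWithin_neBot.mp
        rw [closure_Ico hTs0.ne]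
        exact ⟨hTs1, le_rfl⟩
      have hcwa : ContinuousWithinAt v (Set.Ico t0 Ts) Ts :=
        ((hvcont b) Ts hTs.1).mono (fun x hx => ⟨hx.1, hx.2.le.trans hTsb⟩)
      have htend : Tendsto v (nhdsWithin Ts (Set.Ico t0 Ts)) (nhds 0) := by
        have := hcwa
        rw [ContinuousWithinAt, hvTs] at this
        exact this
      have hev := (htend.eventually (eventually_lt_nhds hδ0pos)).and eventually_mem_nhdsWithin
      obtain ⟨T, hTlt, hTmem⟩ := hev.exists
      have hT1 : t0 ≤ T := hTmem.1
      have hT2 : T < Ts := hTmem.2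
      have hTnot : T ∉ Zs := fun hTZ => absurd (csInf_le hZsbdd hTZ) (not_le.mpr hT2)
      have hvTne : v T ≠ 0 := by
        intro hvT0
        exact hTnot ⟨⟨hT1, hT2.le.trans hTsb⟩, hvT0⟩
      exact hfinal T hT1 ((hvnn T hT1).lt_of_ne (Ne.symm hvTne)) hTlt
    · push_neg at hhit
      have hsub : (⋃ n : ℕ, Set.Ioc t0 (t0 + n)) = Set.Ioi t0 := by
        ext x
        simp only [Set.mem_iUnion, Set.mem_Ioc, Set.mem_Ioi]
        constructor
        · rintro ⟨n, h1, _⟩; exact h1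
        · intro hx
          obtain ⟨n, hn⟩ := exists_nat_ge (x - t0)
          exact ⟨n, hx, by linarith⟩
      have hseq : Tendsto (fun n : ℕ => ∫ s in Set.Ioc t0 (t0 + n), g s) atTop (nhds (v t0)) := by
        have hmono : Monotone fun n : ℕ => Set.Ioc t0 (t0 + (n:ℝ)) := by
          intro n m' hnm
          exact Set.Ioc_subset_Ioc le_rfl (by exact_mod_cast add_le_add_right (by exact_mod_cast hnm) t0)
        have := MeasureTheory.tendsto_setIntegral_of_monotone
          (s := fun n : ℕ => Set.Ioc t0 (t0 + n)) (f := g)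
          (fun _ => measurableSet_Ioc) hmono (hsub ▸ hgi)
        rw [hsub] at this
        exact this
      have htend0 : Tendsto (fun n : ℕ => v (t0 + n)) atTop (nhds 0) := by
        have heq : ∀ n : ℕ, v (t0 + n) = v t0 - ∫ s in Set.Ioc t0 (t0+n), g s := by
          intro n
          have := hsplit t0 (t0+n) le_rfl (by linarith [Nat.cast_nonneg (α := ℝ) n])
          linarith
        have := tendsto_const_nhds (x := v t0) (f := atTop (α := ℕ)) |>.sub hseq
        rw [sub_self] at this
        exact this.congr (fun n => (heq n).symm)
      obtain ⟨n, hn⟩ := (htend0.eventually (eventually_lt_nhds hδ0pos)).exists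
      have hT : t0 ≤ t0 + n := by linarith [Nat.cast_nonneg (α := ℝ) n]
      exact hfinal (t0+n) hT ((hvnn _ hT).lt_of_ne (Ne.symm (hhit _ hT))) hn
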